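/- Let n ≥ 1 be an integer and d ∈ ℝ with d ≠ 0. The quasi-homogeneous vector field G := (y + d x^{n+1}, (n+1)d x^n y) (type t = (1,n+1), degree n) has no nonconstant polynomial first integral: if I ∈ ℝ[x,y] satisfies ∇I·G = 0, then I is a constant polynomial. -/

import Mathlib

open MvPolynomial

/-- `∇I · (P,Q)` for a planar polynomial vector field `(P,Q)`. -/
noncomputable def gradDot (I P Q : MvPolynomial (Fin 2) ℝ) : MvPolynomial (Fin 2) ℝ :=
  pderiv 0 I * P + pderiv 1 I * Q

namespace CaseB3Aux

lemma coeff_pderiv' {σ : Type*} [DecidableEq σ] (i : σ) (f : MvPolynomial σ ℝ) (m : σ →₀ ℕ) :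
    coeff m (pderiv i f) = ((m i : ℝ) + 1) * coeff (m + Finsupp.single i 1) f := by
  induction f using MvPolynomial.induction_on' with
  | add p q hp hq => simp [hp, hq, mul_add]
  | monomial s a =>
    rw [pderiv_monomial, coeff_monomial, coeff_monomial]
    by_cases hs : s = m + Finsupp.single i 1
    · have h1 : s - Finsupp.single i 1 = m := by
        rw [hs]; exact add_tsub_cancel_right _ _
      have h2 : s i = m i + 1 := by simp [hs]
      rw [if_pos h1, if_pos hs, h2]
      push_cast; ring
    · rw [if_neg hs, mul_zero]
      by_cases h : s - Finsupp.single i 1 = m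
      · rw [if_pos h]
        rcases Nat.eq_zero_or_pos (s i) with h0 | h0
        · simp [h0]
        · exfalso
          apply hs
          rw [← h, tsub_add_cancel_of_le]
          exact Finsupp.single_le_iff.mpr h0
      · rw [if_neg h]

lemma coeff_X_mul_pderiv' {σ : Type*} [DecidableEq σ] (i : σ) (f : MvPolynomial σ ℝ)
    (m : σ →₀ ℕ) : coeff m (X i * pderiv i f) = (m i : ℝ) * coeff m f := by
  rw [coeff_X_mul']
  by_cases h : i ∈ m.support
  · rw [if_pos h, coeff_pderiv']
    have h1 : 1 ≤ m i := Nat.one_le_iff_ne_zero.mpr (Finsupp.mem_support_iff.mp h)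
    have h2 : m - Finsupp.single i 1 + Finsupp.single i 1 = m :=
      tsub_add_cancel_of_le (Finsupp.single_le_iff.mpr h1)
    have h3 : ((m - Finsupp.single i 1 : _ →₀ ℕ)) i = m i - 1 := by
      rw [Finsupp.tsub_apply, Finsupp.single_eq_same]
    rw [h2, h3]
    congr 1
    rw [Nat.cast_sub h1]
    push_cast; ring
  · rw [if_neg h]
    have : m i = 0 := Finsupp.notMem_support_iff.mp h
    simp [this]

lemma pderiv_comm' {σ : Type*} [DecidableEq σ] (i j : σ) (f : MvPolynomial σ ℝ) :
    pderiv i (pderiv j f) = pderiv j (pderiv i f) := by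
  by_cases hij : i = j
  · subst hij; rfl
  · ext m
    rw [coeff_pderiv', coeff_pderiv', coeff_pderiv', coeff_pderiv']
    have e1 : ((m + Finsupp.single i 1 : _ →₀ ℕ)) j = m j := by
      rw [Finsupp.add_apply, Finsupp.single_apply, if_neg hij, add_zero]
    have e2 : ((m + Finsupp.single j 1 : _ →₀ ℕ)) i = m i := by
      rw [Finsupp.add_apply, Finsupp.single_apply, if_neg (Ne.symm hij), add_zero]
    rw [e1, e2, add_right_comm]
    ring

/-- The key equation `y ∂ₓK + d xⁿ (a K + x ∂ₓK + (n+1) y ∂_y K) = 0`. -/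
def Geq (n : ℕ) (d a : ℝ) (K : MvPolynomial (Fin 2) ℝ) : Prop :=
  X 1 * pderiv 0 K + C d * X 0 ^ n *
    (C a * K + X 0 * pderiv 0 K + C ((n : ℝ) + 1) * (X 1 * pderiv 1 K)) = 0

lemma coeff_front {n : ℕ} {d : ℝ} (hd : d ≠ 0) {g T : MvPolynomial (Fin 2) ℝ}
    (h : X 1 * g + C d * X 0 ^ n * T = 0) :
    ∀ m : Fin 2 →₀ ℕ, m 1 = 0 → coeff m T = 0 := by
  classical
  intro m hm
  have hc := congrArg (coeff (Finsupp.single 0 n + m)) h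
  have hmono : (C d * X 0 ^ n : MvPolynomial (Fin 2) ℝ) = monomial (Finsupp.single 0 n) d := by
    rw [X_pow_eq_monomial, C_mul_monomial, mul_one]
  have hs1 : (1 : Fin 2) ∉ (Finsupp.single (0 : Fin 2) n + m).support := by
    simp [Finsupp.mem_support_iff, Finsupp.add_apply, Finsupp.single_apply, hm]
  rw [coeff_zero, coeff_add, coeff_X_mul', if_neg hs1, hmono, coeff_monomial_mul,
    zero_add] at hc
  exact (mul_eq_zero.mp hc).resolve_left hd

lemma C1 {n : ℕ} {d a : ℝ} {K : MvPolynomial (Fin 2) ℝ} (hd : d ≠ 0) (h : Geq n d a K) :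
    ∀ m : Fin 2 →₀ ℕ, m 1 = 0 → (a + (m 0 : ℝ)) * coeff m K = 0 := by
  intro m hm
  have hc := coeff_front hd h m hm
  rw [coeff_add, coeff_add, coeff_C_mul, coeff_X_mul_pderiv', coeff_C_mul,
    coeff_X_mul_pderiv', hm] at hc
  push_cast at hc
  linear_combination hc

lemma C2 {K : MvPolynomial (Fin 2) ℝ} (h : ∀ m : Fin 2 →₀ ℕ, m 1 = 0 → coeff m K = 0) :
    X 1 ∣ K := by
  classical
  rw [X_dvd_iff_modMonomial_eq_zero]
  ext m
  rw [coeff_zero]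
  by_cases hle : Finsupp.single (1 : Fin 2) 1 ≤ m
  · exact coeff_modMonomial_of_le K hle
  · rw [coeff_modMonomial_of_not_le K hle]
    apply h
    by_contra hm
    exact hle (Finsupp.single_le_iff.mpr (Nat.one_le_iff_ne_zero.mpr hm))

lemma C3 {n : ℕ} {d a : ℝ} {K : MvPolynomial (Fin 2) ℝ} (h : Geq n d a (X 1 * K)) :
    Geq n d (a + ((n : ℝ) + 1)) K := by
  unfold Geq at h ⊢
  have e0 : pderiv 0 (X 1 * K) = X 1 * pderiv 0 K := by
    rw [pderiv_mul, pderiv_X_of_ne (show (1 : Fin 2) ≠ 0 by decide), zero_mul, zero_add]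
  have e1 : pderiv 1 (X 1 * K) = K + X 1 * pderiv 1 K := by
    rw [pderiv_mul, pderiv_X_self, one_mul]
  rw [e0, e1] at h
  have h2 : X 1 * (X 1 * pderiv 0 K + C d * X 0 ^ n *
      (C (a + ((n : ℝ) + 1)) * K + X 0 * pderiv 0 K +
        C ((n : ℝ) + 1) * (X 1 * pderiv 1 K))) = 0 := by
    rw [map_add]
    linear_combination h
  exact (mul_eq_zero.mp h2).resolve_left (X_ne_zero 1)

lemma C4 {n : ℕ} {d : ℝ} (hd : d ≠ 0) :
    ∀ (N : ℕ) (K : MvPolynomial (Fin 2) ℝ) (a : ℝ), degreeOf 1 K ≤ N → 0 < a →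
      Geq n d a K → K = 0 := by
  intro N
  induction N with
  | zero =>
    intro K a hdeg ha h
    obtain ⟨K', rfl⟩ := C2 (fun m hm => by
      have h1 := C1 hd h m hm
      have h2 : 0 < a + (m 0 : ℝ) := by positivity
      exact (mul_eq_zero.mp h1).resolve_left (ne_of_gt h2))
    by_cases hK' : K' = 0
    · rw [hK', mul_zero]
    · exfalso
      have := (degreeOf_mul_X_eq_degreeOf_add_one_iff 1 K').mpr hK'
      rw [mul_comm] at hdeg
      omega
  | succ N ih =>
    intro K a hdeg ha h
    obtain ⟨K', rfl⟩ := C2 (fun m hm => by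
      have h1 := C1 hd h m hm
      have h2 : 0 < a + (m 0 : ℝ) := by positivity
      exact (mul_eq_zero.mp h1).resolve_left (ne_of_gt h2))
    by_cases hK' : K' = 0
    · rw [hK', mul_zero]
    · have hdeg' : degreeOf 1 K' ≤ N := by
        have := (degreeOf_mul_X_eq_degreeOf_add_one_iff 1 K').mpr hK'
        rw [mul_comm] at hdeg
        omega
      have ha' : 0 < a + ((n : ℝ) + 1) := by positivity
      rw [ih K' (a + ((n : ℝ) + 1)) hdeg' ha' (C3 h), mul_zero]

end CaseB3Aux

open CaseB3Aux in
/-- The quasi-homogeneous vector field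
`G = (y + d x^{n+1}, (n+1)d x^n y)` with `d ≠ 0` (case B3)
has no nonconstant polynomial first integral. -/
theorem caseB3_not_polynomially_integrable
    (n : ℕ) (hn : 1 ≤ n) (d : ℝ) (hd : d ≠ 0) :
    ∀ I : MvPolynomial (Fin 2) ℝ,
      gradDot I (X 1 + C d * X 0 ^ (n + 1))
        (C (((n : ℝ) + 1) * d) * X 0 ^ n * X 1) = 0 →
      ∃ c : ℝ, I = C c := by
  obtain ⟨m, rfl⟩ : ∃ m, n = m + 1 := ⟨n - 1, (Nat.succ_pred_eq_of_pos hn).symm⟩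
  intro I hI
  unfold gradDot at hI
  have hsplit : (C ((((m + 1 : ℕ) : ℝ) + 1) * d) : MvPolynomial (Fin 2) ℝ)
      = C (((m + 1 : ℕ) : ℝ) + 1) * C d := map_mul (C : ℝ →+* _) _ _
  rw [hsplit] at hI
  -- the base equation in the form `y ∂ₓI + d xⁿ (x ∂ₓI + (n+1) y ∂_y I) = 0`
  have hA : X 1 * pderiv 0 I + C d * X 0 ^ (m + 1) *
      (X 0 * pderiv 0 I + C (((m + 1 : ℕ) : ℝ) + 1) * (X 1 * pderiv 1 I)) = 0 := by
    linear_combination hI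
  -- J := E(I); it vanishes on y = 0, hence X 1 ∣ J
  obtain ⟨K, hK⟩ : X 1 ∣ (X 0 * pderiv 0 I +
      C (((m + 1 : ℕ) : ℝ) + 1) * (X 1 * pderiv 1 I)) :=
    C2 (coeff_front hd hA)
  -- differentiate the base equation
  have hAx := congrArg (pderiv 0) hA
  have hAy := congrArg (pderiv 1) hA
  simp only [map_add, map_zero, pderiv_mul, pderiv_X_self, pderiv_C,
    pderiv_X_of_ne (show (1 : Fin 2) ≠ 0 by decide),
    pderiv_X_of_ne (show (0 : Fin 2) ≠ 1 by decide),
    pderiv_pow, Nat.add_sub_cancel, zero_mul, mul_zero, zero_add, add_zero,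
    mul_one, one_mul] at hAx hAy
  rw [pderiv_comm' (0 : Fin 2) 1 I] at hAx
  -- normalize constants to `Nat.cast` form
  have hA' := hA
  simp only [map_add, map_one, C_eq_coe_nat] at hA' hAx hAy
  push_cast at hA' hAx hAy
  -- J satisfies the same type of equation
  have hJeq : Geq (m + 1) d 0 (X 0 * pderiv 0 I +
      C (((m + 1 : ℕ) : ℝ) + 1) * (X 1 * pderiv 1 I)) := by
    unfold Geq
    simp only [map_add, map_zero, pderiv_mul, pderiv_X_self, pderiv_C,
      pderiv_X_of_ne (show (1 : Fin 2) ≠ 0 by decide),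
      pderiv_X_of_ne (show (0 : Fin 2) ≠ 1 by decide),
      pderiv_pow, Nat.add_sub_cancel, zero_mul, mul_zero, zero_add, add_zero,
      mul_one, one_mul, map_one, C_eq_coe_nat, Derivation.map_natCast,
      Derivation.map_one_eq_zero]
    rw [pderiv_comm' (0 : Fin 2) 1 I]
    push_cast
    linear_combination X 0 * hAx + ((m : MvPolynomial (Fin 2) ℝ) + 2) * X 1 * hAy
      - ((m : MvPolynomial (Fin 2) ℝ) + 1) * hA'
  rw [hK] at hJeq
  have hK0 : K = 0 :=
    C4 hd (degreeOf 1 K) K _ le_rfl (by positivity) (C3 hJeq)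
  rw [hK0, mul_zero] at hK
  -- conclude that I is constant
  refine ⟨coeff 0 I, ?_⟩
  ext mm
  rw [coeff_C]
  split_ifs with h0
  · rw [h0]
  · have hc := congrArg (coeff mm) hK
    rw [coeff_zero, coeff_add, coeff_X_mul_pderiv', coeff_C_mul,
      coeff_X_mul_pderiv'] at hc
    have hne : mm 0 ≠ 0 ∨ mm 1 ≠ 0 := by
      by_contra hcon
      push_neg at hcon
      apply h0
      ext i
      fin_cases i <;> simp [hcon.1, hcon.2]
    have hpos : 0 < (mm 0 : ℝ) + ((((m + 1 : ℕ) : ℝ) + 1)) * (mm 1 : ℝ) := by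
      rcases hne with h | h
      · have h1 : (1 : ℝ) ≤ (mm 0 : ℝ) := by exact_mod_cast Nat.one_le_iff_ne_zero.mpr h
        have h2 : (0 : ℝ) ≤ ((((m + 1 : ℕ) : ℝ) + 1)) * (mm 1 : ℝ) := by positivity
        linarith
      · have h1 : (1 : ℝ) ≤ (mm 1 : ℝ) := by exact_mod_cast Nat.one_le_iff_ne_zero.mpr h
        have h2 : (1 : ℝ) ≤ (((m + 1 : ℕ) : ℝ) + 1) := by
          have : (0 : ℝ) ≤ ((m : ℝ)) := Nat.cast_nonneg m
          push_cast
          linarith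
        have h3 : (0 : ℝ) ≤ (mm 0 : ℝ) := Nat.cast_nonneg _
        nlinarith
    have hfac : ((mm 0 : ℝ) + ((((m + 1 : ℕ) : ℝ) + 1)) * (mm 1 : ℝ)) * coeff mm I = 0 := by
      linear_combination hc
    exact (mul_eq_zero.mp hfac).resolve_left (ne_of_gt hpos)
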